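/- Let F be the free group on {a, b, c} and H = ⟨a⁴, a²ba, aca², bc⁻¹⟩, freely generated by w₁ = a⁴, w₂ = a²ba, w₃ = aca², w₄ = bc⁻¹. For every n, the element [w₁ⁿ, w₄] lies in ⟨⟨Nₙ⟩⟩_F where Nₙ = ⟨⟨[w₁ⁿ, w₂], [w₁ⁿ, w₃]⟩⟩_H, but [w₁ⁿ, w₄] ∉ Nₙ; consequently H does not have ACEP in F. -/

import Mathlib

/-- The conjugacy class of `w` by conjugators from the subgroup `H`. -/
def conjClassIn {F : Type*} [Group F] (H : Subgroup F) (w : F) : Set F :=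
  {x | ∃ h ∈ H, x = h⁻¹ * w * h}

/-- `H` is an S-subgroup of `F` if some `w ∈ H` satisfies `w^H ≠ w^F ∩ H`. -/
def IsSSubgroup {F : Type*} [Group F] (H : Subgroup F) : Prop :=
  ∃ w ∈ H, conjClassIn H w ≠ conjClassIn (⊤ : Subgroup F) w ∩ (H : Set F)

/-- `H` has the Almost Congruence Extension Property in `F`: there is a finite set `Φ`
of nontrivial elements of `H` such that for every subgroup `N ≤ H` normal in `H` with
`N ∩ Φ = ∅`, one has `H ∩ ⟪N⟫_F = N`. -/
def ACEP {F : Type*} [Group F] (H : Subgroup F) : Prop :=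
  ∃ Φ : Finset F, (∀ x ∈ Φ, x ∈ H ∧ x ≠ 1) ∧
    ∀ N : Subgroup F, N ≤ H →
      (∀ h ∈ H, ∀ x ∈ N, h * x * h⁻¹ ∈ N) →
      (∀ x ∈ Φ, x ∉ N) →
      (H : Set F) ∩ (Subgroup.normalClosure (N : Set F) : Set F) = (N : Set F)

/-- `w` is a proper power: `w = a ^ n` for some `n ≥ 2`. -/
def IsProperPower {G : Type*} [Group G] (w : G) : Prop :=
  ∃ a : G, ∃ n : ℕ, 2 ≤ n ∧ w = a ^ n

open scoped commutatorElement


namespace Stmt13Aux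

open FreeGroup

set_option linter.unusedSectionVars false

section

variable {α : Type} [DecidableEq α]

def Up (w : List (α × Bool)) (g : α) (j : ℕ) : Prop :=
  ∃ u v, w = u ++ (g, true) :: v ∧ v.length = j

def Down (w : List (α × Bool)) (g : α) (j : ℕ) : Prop :=
  ∃ u v, w = u ++ (g, false) :: v ∧ v.length = j

lemma up_lt {w : List (α × Bool)} {g j} (h : Up w g j) : j < w.length := by
  obtain ⟨u, v, rfl, rfl⟩ := h; simp; omega

lemma down_lt {w : List (α × Bool)} {g j} (h : Down w g j) : j < w.length := by
  obtain ⟨u, v, rfl, rfl⟩ := h; simp; omega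

lemma suffix_eq {w : List (α × Bool)} {x x' : α × Bool} {u v u' v'}
    (h : w = u ++ x :: v) (h' : w = u' ++ x' :: v') (hl : v.length = v'.length) :
    x = x' ∧ v = v' := by
  have hu : u.length = u'.length := by
    have e1 := congrArg List.length h
    have e2 := congrArg List.length h'
    simp at e1 e2; omega
  rw [h] at h'
  obtain ⟨-, h2⟩ := List.append_inj h' hu
  exact ⟨(List.cons.injEq _ _ _ _ ▸ h2).1, (List.cons.injEq _ _ _ _ ▸ h2).2⟩

lemma not_up_down {w : List (α × Bool)} {g j} (h : Up w g j) (h' : Down w g j) : False := by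
  obtain ⟨u, v, hw, hv⟩ := h
  obtain ⟨u', v', hw', hv'⟩ := h'
  have := (suffix_eq hw hw' (by omega)).1
  simp at this

lemma drop_of_decomp {w u v : List (α × Bool)} {x : α × Bool} (h : w = u ++ x :: v) :
    List.drop u.length w = x :: v := by
  rw [h, List.drop_left]

lemma adj1 {w : List (α × Bool)} (hred : FreeGroup.reduce w = w) {g j}
    (h : Up w g j) (h' : Down w g (j + 1)) : False := by
  obtain ⟨u, v, hw, hv⟩ := h
  obtain ⟨u', v', hw', hv'⟩ := h'
  have hlen : u'.length + 1 = u.length := by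
    have e1 := congrArg List.length hw
    have e2 := congrArg List.length hw'
    simp at e1 e2; omega
  have d1 : List.drop u.length w = (g, true) :: v := drop_of_decomp hw
  have d2 : List.drop u'.length w = (g, false) :: v' := drop_of_decomp hw'
  have d3 : v' = (g, true) :: v := by
    have := congrArg (List.drop 1) d2
    rw [List.drop_drop, hlen, d1] at this
    simpa using this.symm
  exact FreeGroup.reduce.not (L₁ := w) (L₂ := u') (L₃ := v) (x := g) (b := false)
    (by rw [hred, hw', d3]; rfl)

lemma adj2 {w : List (α × Bool)} (hred : FreeGroup.reduce w = w) {g j}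
    (h : Down w g j) (h' : Up w g (j + 1)) : False := by
  obtain ⟨u, v, hw, hv⟩ := h
  obtain ⟨u', v', hw', hv'⟩ := h'
  have hlen : u'.length + 1 = u.length := by
    have e1 := congrArg List.length hw
    have e2 := congrArg List.length hw'
    simp at e1 e2; omega
  have d1 : List.drop u.length w = (g, false) :: v := drop_of_decomp hw
  have d2 : List.drop u'.length w = (g, true) :: v' := drop_of_decomp hw'
  have d3 : v' = (g, false) :: v := by
    have := congrArg (List.drop 1) d2
    rw [List.drop_drop, hlen, d1] at this
    simpa using this.symm
  exact FreeGroup.reduce.not (L₁ := w) (L₂ := u') (L₃ := v) (x := g) (b := true)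
    (by rw [hred, hw', d3]; rfl)

variable (w : List (α × Bool))

def SrcN (g : α) (j : ℕ) : Prop := Up w g j ∨ ∃ j', j = j' + 1 ∧ Down w g j'

def TgtN (g : α) (j : ℕ) : Prop := Down w g j ∨ ∃ j', j = j' + 1 ∧ Up w g j'

open scoped Classical in
noncomputable def T (g : α) (j : ℕ) : ℕ := if Up w g j then j + 1 else j - 1

open scoped Classical in
noncomputable def U (g : α) (j : ℕ) : ℕ := if Down w g j then j + 1 else j - 1

lemma T_bound {g j} (h : SrcN w g j) (hj : j < w.length + 1) : T w g j < w.length + 1 := by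
  rcases h with h | ⟨j', rfl, hd⟩
  · rw [T, if_pos h]; have := up_lt h; omega
  · rw [T]; split <;> [skip; omega]
    have := up_lt (by assumption : Up w g (j' + 1)); omega

lemma T_tgt {g j} (h : SrcN w g j) : TgtN w g (T w g j) := by
  rcases h with h | ⟨j', rfl, hd⟩
  · rw [T, if_pos h]; exact Or.inr ⟨j, rfl, h⟩
  · by_cases h' : Up w g (j' + 1)
    · rw [T, if_pos h']; exact Or.inr ⟨j' + 1, rfl, h'⟩
    · rw [T, if_neg h', Nat.add_sub_cancel]; exact Or.inl hd

lemma U_bound {g j} (h : TgtN w g j) (hj : j < w.length + 1) : U w g j < w.length + 1 := by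
  rcases h with h | ⟨j', rfl, hu⟩
  · rw [U, if_pos h]; have := down_lt h; omega
  · rw [U]; split <;> [skip; omega]
    have := down_lt (by assumption : Down w g (j' + 1)); omega

lemma U_src {g j} (h : TgtN w g j) : SrcN w g (U w g j) := by
  rcases h with h | ⟨j', rfl, hu⟩
  · rw [U, if_pos h]; exact Or.inr ⟨j, rfl, h⟩
  · by_cases h' : Down w g (j' + 1)
    · rw [U, if_pos h']; exact Or.inr ⟨j' + 1, rfl, h'⟩
    · rw [U, if_neg h', Nat.add_sub_cancel]; exact Or.inl hu

lemma UT (hred : FreeGroup.reduce w = w) {g j} (h : SrcN w g j) : U w g (T w g j) = j := by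
  rcases h with h | ⟨j', rfl, hd⟩
  · rw [T, if_pos h, U, if_neg (fun h' => adj1 hred h h'), Nat.add_sub_cancel]
  · rw [T, if_neg (fun h' => (adj2 hred hd h').elim), Nat.add_sub_cancel, U, if_pos hd]

lemma TU (hred : FreeGroup.reduce w = w) {g j} (h : TgtN w g j) : T w g (U w g j) = j := by
  rcases h with h | ⟨j', rfl, hu⟩
  · rw [U, if_pos h, T, if_neg (fun h' => adj2 hred h h'), Nat.add_sub_cancel]
  · rw [U, if_neg (fun h' => (adj1 hred hu h').elim), Nat.add_sub_cancel, T, if_pos hu]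

def Src (g : α) (j : Fin (w.length + 1)) : Prop := SrcN w g j.val
def Tgt (g : α) (j : Fin (w.length + 1)) : Prop := TgtN w g j.val

noncomputable def eqv (hred : FreeGroup.reduce w = w) (g : α) : {j // Src w g j} ≃ {j // Tgt w g j} where
  toFun p := ⟨⟨T w g p.1.val, T_bound w p.2 p.1.isLt⟩, T_tgt w p.2⟩
  invFun p := ⟨⟨U w g p.1.val, U_bound w p.2 p.1.isLt⟩, U_src w p.2⟩
  left_inv p := Subtype.ext (Fin.ext (UT w hred p.2))
  right_inv p := Subtype.ext (Fin.ext (TU w hred p.2))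

noncomputable def sigma (hred : FreeGroup.reduce w = w) (g : α) : Equiv.Perm (Fin (w.length + 1)) := by
  classical
  exact (eqv w hred g).extendSubtype

lemma sigma_apply (hred : FreeGroup.reduce w = w) {g : α} {j : Fin (w.length + 1)}
    (h : Src w g j) :
    sigma w hred g j = ⟨T w g j.val, T_bound w h j.isLt⟩ := by
  classical
  rw [sigma]
  rw [Equiv.extendSubtype_apply_of_mem (eqv w hred g) j h]
  rfl

lemma sigma_up (hred : FreeGroup.reduce w = w) {g j} (h : Up w g j) :
    sigma w hred g ⟨j, by have := up_lt h; omega⟩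
      = ⟨j + 1, by have := up_lt h; omega⟩ := by
  rw [sigma_apply w hred (show Src w g _ from Or.inl h)]
  exact Fin.ext (by simp [T, if_pos h])

lemma sigma_down (hred : FreeGroup.reduce w = w) {g j} (h : Down w g j) :
    sigma w hred g ⟨j + 1, by have := down_lt h; omega⟩
      = ⟨j, by have := down_lt h; omega⟩ := by
  rw [sigma_apply w hred (show Src w g _ from Or.inr ⟨j, rfl, h⟩)]
  exact Fin.ext (by simp [T, if_neg (fun h' => adj2 hred h h')])

lemma sigma_down_inv (hred : FreeGroup.reduce w = w) {g j} (h : Down w g j) :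
    (sigma w hred g)⁻¹ ⟨j, by have := down_lt h; omega⟩
      = ⟨j + 1, by have := down_lt h; omega⟩ := by
  rw [Equiv.Perm.inv_def, Equiv.symm_apply_eq]
  exact (sigma_down w hred h).symm

lemma eval (hred : FreeGroup.reduce w = w) : ∀ (v u : List (α × Bool)) (_ : w = u ++ v) (h0 : 0 < w.length + 1)
    (hv : v.length < w.length + 1),
    (v.map fun x => cond x.2 (sigma w hred x.1) (sigma w hred x.1)⁻¹).prod
        ⟨0, h0⟩
      = ⟨v.length, hv⟩ := by
  intro v
  induction v with
  | nil => intro u hw h0 hv; simp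
  | cons x v' ih =>
      intro u hw h0 hv
      obtain ⟨g, b⟩ := x
      have hw' : w = (u ++ [(g, b)]) ++ v' := by simpa using hw
      have hv' : v'.length < w.length + 1 := by simp at hv ⊢; omega
      have hih := ih (u ++ [(g, b)]) hw' h0 hv'
      rw [List.map_cons, List.prod_cons, Equiv.Perm.mul_apply, hih]
      cases b with
      | true =>
          have hu : Up w g v'.length := ⟨u, v', hw, rfl⟩
          have := sigma_up w hred hu
          simpa using this
      | false =>
          have hd : Down w g v'.length := ⟨u, v', hw, rfl⟩
          have := sigma_down_inv w hred hd
          simpa using this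

/-- Residual finiteness witness for a nontrivial element of a free group. -/
theorem rf {x : FreeGroup α} (hx : x ≠ 1) :
    ∃ (m : ℕ) (φ : FreeGroup α →* Equiv.Perm (Fin (m + 1))), φ x ≠ 1 := by
  have hred : FreeGroup.reduce x.toWord = x.toWord := reduce_toWord x
  refine ⟨x.toWord.length, FreeGroup.lift (fun g => sigma x.toWord hred g), ?_⟩
  intro h1
  have hx' : FreeGroup.mk x.toWord = x := mk_toWord
  have hl : FreeGroup.lift (fun g => sigma x.toWord hred g) (FreeGroup.mk x.toWord)
      = (x.toWord.map fun p =>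
          cond p.2 (sigma x.toWord hred p.1) (sigma x.toWord hred p.1)⁻¹).prod :=
    FreeGroup.lift_mk
  rw [hx', h1] at hl
  have he := eval x.toWord hred x.toWord [] rfl (by omega) (by omega)
  rw [← hl] at he
  have hlen : x.toWord.length = 0 := by
    have := congrArg Fin.val he
    simpa using this.symm
  exact hx (FreeGroup.toWord_eq_nil_iff.mp (List.length_eq_zero_iff.mp hlen))

end

end Stmt13Aux

namespace Stmt13Aux2


open Subgroup Equiv

abbrev FG := FreeGroup (Fin 3)

noncomputable def yy : Equiv.Perm ℤ := Equiv.addRight (1 : ℤ)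
noncomputable def zz : Equiv.Perm ℤ := Equiv.neg ℤ

lemma y_pow_apply (n : ℕ) (t : ℤ) : (yy ^ n) t = t + n := by
  induction n with
  | zero => simp
  | succ k ih =>
      rw [pow_succ', Equiv.Perm.mul_apply, ih]
      show (t + (k : ℤ)) + 1 = t + ((k + 1 : ℕ) : ℤ)
      push_cast; ring

lemma perm_inv_app {β : Type*} {σ : Equiv.Perm β} {p q : β} (h : σ q = p) : σ⁻¹ p = q := by
  rw [← h]; simp

lemma y_pow_inv_apply (n : ℕ) (t : ℤ) : (yy ^ n)⁻¹ t = t - n :=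
  perm_inv_app (by rw [y_pow_apply]; ring)

lemma zz_apply (t : ℤ) : zz t = -t := rfl

lemma zz_inv_apply (t : ℤ) : zz⁻¹ t = -t := perm_inv_app (by rw [zz_apply, neg_neg])

abbrev Om := ZMod 4 × Equiv.Perm ℤ

noncomputable def PA : Equiv.Perm Om :=
  (Equiv.addRight (1 : ZMod 4)).prodShear fun i => if i = 3 then Equiv.mulLeft yy else Equiv.refl _

noncomputable def PB : Equiv.Perm Om :=
  (Equiv.swap (1 : ZMod 4) 2).prodShear fun i =>
    if i = 0 then Equiv.mulLeft zz else if i = 1 then Equiv.mulLeft yy⁻¹ else Equiv.refl _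

noncomputable def PC : Equiv.Perm Om :=
  (Equiv.swap (2 : ZMod 4) 3).prodShear fun i =>
    if i = 2 then Equiv.mulLeft yy⁻¹ else Equiv.refl _

noncomputable def psi : FreeGroup (Fin 3) →* Equiv.Perm Om := FreeGroup.lift ![PA, PB, PC]

lemma PA_app (i : ZMod 4) (γ : Equiv.Perm ℤ) :
    PA (i, γ) = (i + 1, if i = 3 then yy * γ else γ) := by
  by_cases h : i = 3 <;> simp [PA, h]

lemma PB_app (i : ZMod 4) (γ : Equiv.Perm ℤ) :
    PB (i, γ) = (Equiv.swap (1 : ZMod 4) 2 i,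
      if i = 0 then zz * γ else if i = 1 then yy⁻¹ * γ else γ) := by
  by_cases h0 : i = 0 <;> by_cases h1 : i = 1 <;> simp_all [PB]

lemma PC_app (i : ZMod 4) (γ : Equiv.Perm ℤ) :
    PC (i, γ) = (Equiv.swap (2 : ZMod 4) 3 i, if i = 2 then yy⁻¹ * γ else γ) := by
  by_cases h : i = 2 <;> simp [PC, h]

lemma psi_a : psi (FreeGroup.of 0) = PA := by simp [psi]
lemma psi_b : psi (FreeGroup.of 1) = PB := by simp [psi]
lemma psi_c : psi (FreeGroup.of 2) = PC := by simp [psi]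

lemma PA0 (γ : Equiv.Perm ℤ) : PA ((0 : ZMod 4), γ) = (1, γ) := by
  simp [PA_app, show (0 : ZMod 4) ≠ 3 by decide, show (0 : ZMod 4) + 1 = 1 by decide]

lemma PA1 (γ : Equiv.Perm ℤ) : PA ((1 : ZMod 4), γ) = (2, γ) := by
  simp [PA_app, show (1 : ZMod 4) ≠ 3 by decide, show (1 : ZMod 4) + 1 = 2 by decide]

lemma PA2 (γ : Equiv.Perm ℤ) : PA ((2 : ZMod 4), γ) = (3, γ) := by
  simp [PA_app, show (2 : ZMod 4) ≠ 3 by decide, show (2 : ZMod 4) + 1 = 3 by decide]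

lemma PA3 (γ : Equiv.Perm ℤ) : PA ((3 : ZMod 4), γ) = (0, yy * γ) := by
  simp [PA_app, show (3 : ZMod 4) + 1 = 0 by decide]

lemma A4 (γ : Equiv.Perm ℤ) : (PA ^ 4) ((0 : ZMod 4), γ) = (0, yy * γ) := by
  have h4 : PA ^ 4 = PA * PA * PA * PA := by
    rw [pow_succ, pow_succ, pow_succ, pow_one]
  rw [h4]
  simp only [Equiv.Perm.mul_apply]
  rw [PA0, PA1, PA2, PA3]

lemma A4n (m : ℕ) (γ : Equiv.Perm ℤ) :
    ((PA ^ 4) ^ m) ((0 : ZMod 4), γ) = (0, yy ^ m * γ) := by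
  induction m generalizing γ with
  | zero => simp
  | succ k ih =>
      rw [pow_succ', Equiv.Perm.mul_apply, ih, A4, pow_succ', mul_assoc]

lemma A4n_inv (m : ℕ) (γ : Equiv.Perm ℤ) :
    ((PA ^ 4) ^ m)⁻¹ ((0 : ZMod 4), γ) = (0, (yy ^ m)⁻¹ * γ) :=
  perm_inv_app (by rw [A4n, mul_inv_cancel_left])


lemma psi_w1 : psi (FreeGroup.of (0 : Fin 3) ^ 4) = PA ^ 4 := by rw [map_pow, psi_a]

lemma PB0 (γ : Equiv.Perm ℤ) : PB ((0 : ZMod 4), γ) = (0, zz * γ) := by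
  simp [PB_app, show Equiv.swap (1 : ZMod 4) 2 0 = 0 from by decide]

lemma PB1 (γ : Equiv.Perm ℤ) : PB ((1 : ZMod 4), γ) = (2, yy⁻¹ * γ) := by
  simp [PB_app, show Equiv.swap (1 : ZMod 4) 2 1 = 2 from by decide,
    show (1 : ZMod 4) ≠ 0 by decide]

lemma PC0 (γ : Equiv.Perm ℤ) : PC ((0 : ZMod 4), γ) = (0, γ) := by
  simp [PC_app, show Equiv.swap (2 : ZMod 4) 3 0 = 0 from by decide,
    show (0 : ZMod 4) ≠ 2 by decide]

lemma PC2 (γ : Equiv.Perm ℤ) : PC ((2 : ZMod 4), γ) = (3, yy⁻¹ * γ) := by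
  simp [PC_app, show Equiv.swap (2 : ZMod 4) 3 2 = 3 from by decide]

lemma W1n (m : ℕ) (γ : Equiv.Perm ℤ) :
    (psi (FreeGroup.of (0 : Fin 3) ^ 4) ^ m) ((0 : ZMod 4), γ) = (0, yy ^ m * γ) := by
  rw [psi_w1, A4n]

lemma W2fix (γ : Equiv.Perm ℤ) :
    psi (FreeGroup.of (0 : Fin 3) ^ 2 * FreeGroup.of 1 * FreeGroup.of 0) ((0 : ZMod 4), γ)
      = (0, γ) := by
  rw [map_mul, map_mul, map_pow, psi_a, psi_b]
  simp only [Equiv.Perm.mul_apply, pow_two, PA0]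
  rw [PB1, PA2, PA3, mul_inv_cancel_left]

lemma W3fix (γ : Equiv.Perm ℤ) :
    psi (FreeGroup.of (0 : Fin 3) * FreeGroup.of 2 * FreeGroup.of 0 ^ 2) ((0 : ZMod 4), γ)
      = (0, γ) := by
  rw [map_mul, map_mul, map_pow, psi_a, psi_c]
  simp only [Equiv.Perm.mul_apply, pow_two, PA0, PA1]
  rw [PC2, PA3, mul_inv_cancel_left]

lemma W4act (γ : Equiv.Perm ℤ) :
    psi (FreeGroup.of (1 : Fin 3) * (FreeGroup.of 2)⁻¹) ((0 : ZMod 4), γ)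
      = (0, zz * γ) := by
  rw [map_mul, map_inv, psi_b, psi_c]
  simp only [Equiv.Perm.mul_apply]
  have hc : PC⁻¹ ((0 : ZMod 4), γ) = (0, γ) := perm_inv_app (PC0 γ)
  rw [hc, PB0]

/-- the subgroup of permutations acting as a left translation on the `0` fiber -/
noncomputable def Blk : Subgroup (Equiv.Perm Om) where
  carrier := {σ | ∃ δ : Equiv.Perm ℤ, ∀ γ, σ ((0 : ZMod 4), γ) = (0, δ * γ)}
  one_mem' := ⟨1, by simp⟩
  mul_mem' := by
    rintro σ τ ⟨δ1, h1⟩ ⟨δ2, h2⟩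
    exact ⟨δ1 * δ2, fun γ => by rw [Equiv.Perm.mul_apply, h2, h1, mul_assoc]⟩
  inv_mem' := by
    rintro σ ⟨δ, h⟩
    exact ⟨δ⁻¹, fun γ => perm_inv_app (by rw [h, mul_inv_cancel_left])⟩

lemma blk_inv_apply {σ : Equiv.Perm Om} {δ : Equiv.Perm ℤ}
    (h : ∀ γ, σ ((0 : ZMod 4), γ) = (0, δ * γ)) (γ : Equiv.Perm ℤ) :
    σ⁻¹ ((0 : ZMod 4), γ) = (0, δ⁻¹ * γ) :=
  perm_inv_app (by rw [h, mul_inv_cancel_left])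


lemma psi_w1m_inv (m : ℕ) (γ : Equiv.Perm ℤ) :
    (psi (FreeGroup.of (0 : Fin 3) ^ 4) ^ m)⁻¹ ((0 : ZMod 4), γ) = (0, (yy ^ m)⁻¹ * γ) := by
  rw [psi_w1, A4n_inv]

lemma partB (a b c : FreeGroup (Fin 3))
    (ha : a = FreeGroup.of 0) (hb : b = FreeGroup.of 1) (hc : c = FreeGroup.of 2)
    (w1 w2 w3 w4 : FreeGroup (Fin 3))
    (h1 : w1 = a ^ 4) (h2 : w2 = a ^ 2 * b * a) (h3 : w3 = a * c * a ^ 2)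
    (h4 : w4 = b * c⁻¹)
    (H : Subgroup (FreeGroup (Fin 3))) (hH : H = Subgroup.closure {w1, w2, w3, w4})
    (m : ℕ) (hm : m ≠ 0)
    (N : Subgroup (FreeGroup (Fin 3)))
    (hN : N = Subgroup.closure
      {x | ∃ h ∈ H, x = h * ⁅w1 ^ m, w2⁆ * h⁻¹ ∨ x = h * ⁅w1 ^ m, w3⁆ * h⁻¹}) :
    ⁅w1 ^ m, w4⁆ ∉ N := by
  subst ha hb hc h1 h2 h3 h4 hH hN
  set a := FreeGroup.of (0 : Fin 3)
  set b := FreeGroup.of (1 : Fin 3)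
  set c := FreeGroup.of (2 : Fin 3)
  set w1 := a ^ 4 with hw1
  set w2 := a ^ 2 * b * a with hw2
  set w3 := a * c * a ^ 2 with hw3
  set w4 := b * c⁻¹ with hw4
  have hHB : Subgroup.closure {w1, w2, w3, w4} ≤ Blk.comap psi := by
    rw [Subgroup.closure_le]
    intro x hx
    simp only [Set.mem_insert_iff, Set.mem_singleton_iff] at hx
    rcases hx with rfl | rfl | rfl | rfl
    · exact ⟨yy, fun γ => by rw [psi_w1]; exact A4 γ⟩
    · exact ⟨1, fun γ => by rw [one_mul]; exact W2fix γ⟩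
    · exact ⟨1, fun γ => by rw [one_mul]; exact W3fix γ⟩
    · exact ⟨zz, W4act⟩
  have hfix2 : ∀ γ, psi ⁅w1 ^ m, w2⁆ ((0 : ZMod 4), γ) = (0, γ) := by
    intro γ
    rw [commutatorElement_def, map_mul, map_mul, map_mul, map_inv, map_inv, map_pow]
    simp only [Equiv.Perm.mul_apply]
    rw [show (psi w2)⁻¹ ((0 : ZMod 4), γ) = (0, γ) from perm_inv_app (W2fix γ),
      psi_w1m_inv, W2fix, W1n, mul_inv_cancel_left]
  have hfix3 : ∀ γ, psi ⁅w1 ^ m, w3⁆ ((0 : ZMod 4), γ) = (0, γ) := by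
    intro γ
    rw [commutatorElement_def, map_mul, map_mul, map_mul, map_inv, map_inv, map_pow]
    simp only [Equiv.Perm.mul_apply]
    rw [show (psi w3)⁻¹ ((0 : ZMod 4), γ) = (0, γ) from perm_inv_app (W3fix γ),
      psi_w1m_inv, W3fix, W1n, mul_inv_cancel_left]
  set pt : Om := ((0 : ZMod 4), (1 : Equiv.Perm ℤ)) with hpt
  have hstab : Subgroup.closure
      {x | ∃ h ∈ Subgroup.closure {w1, w2, w3, w4},
        x = h * ⁅w1 ^ m, w2⁆ * h⁻¹ ∨ x = h * ⁅w1 ^ m, w3⁆ * h⁻¹}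
      ≤ Subgroup.comap psi (MulAction.stabilizer (Equiv.Perm Om) pt) := by
    rw [Subgroup.closure_le]
    rintro x ⟨h, hh, (rfl | rfl)⟩ <;>
    · obtain ⟨δ, hδ⟩ := hHB hh
      refine Subgroup.mem_comap.mpr ?_
      show psi _ • pt = pt
      rw [Equiv.Perm.smul_def, map_mul, map_mul, map_inv]
      simp only [Equiv.Perm.mul_apply, hpt]
      rw [blk_inv_apply hδ]
      first
      | rw [hfix2, hδ, mul_inv_cancel_left]
      | rw [hfix3, hδ, mul_inv_cancel_left]
  intro hmem
  have hfixed : psi ⁅w1 ^ m, w4⁆ pt = pt := by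
    have := hstab hmem
    simpa [Equiv.Perm.smul_def] using this
  rw [commutatorElement_def, map_mul, map_mul, map_mul, map_inv, map_inv, map_pow] at hfixed
  simp only [Equiv.Perm.mul_apply, hpt] at hfixed
  rw [blk_inv_apply (fun γ => W4act γ), psi_w1m_inv, W4act, W1n] at hfixed
  have hq : yy ^ m * (zz * ((yy ^ m)⁻¹ * (zz⁻¹ * 1))) = 1 := congrArg Prod.snd hfixed
  have h0 := congrArg (fun σ : Equiv.Perm ℤ => σ 0) hq
  simp only [Equiv.Perm.mul_apply, Equiv.Perm.one_apply] at h0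
  rw [zz_inv_apply, y_pow_inv_apply, zz_apply, y_pow_apply] at h0
  have : (m : ℤ) = 0 := by omega
  exact hm (by exact_mod_cast this)


lemma partA (a b c : FreeGroup (Fin 3))
    (ha : a = FreeGroup.of 0) (hb : b = FreeGroup.of 1) (hc : c = FreeGroup.of 2)
    (w1 w2 w3 w4 : FreeGroup (Fin 3))
    (h1 : w1 = a ^ 4) (h2 : w2 = a ^ 2 * b * a) (h3 : w3 = a * c * a ^ 2)
    (h4 : w4 = b * c⁻¹)
    (H : Subgroup (FreeGroup (Fin 3))) (hH : H = Subgroup.closure {w1, w2, w3, w4})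
    (m : ℕ)
    (N : Subgroup (FreeGroup (Fin 3)))
    (hN : N = Subgroup.closure
      {x | ∃ h ∈ H, x = h * ⁅w1 ^ m, w2⁆ * h⁻¹ ∨ x = h * ⁅w1 ^ m, w3⁆ * h⁻¹}) :
    ⁅w1 ^ m, w4⁆ ∈ Subgroup.normalClosure (N : Set (FreeGroup (Fin 3))) := by
  have hw4 : w4 = a⁻¹ * a⁻¹ * w2 * a * w3⁻¹ * a := by
    rw [h2, h3, h4, ha, hb, hc]; group
  set M := Subgroup.normalClosure (N : Set (FreeGroup (Fin 3))) with hM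
  rw [← QuotientGroup.eq_one_iff (G := FreeGroup (Fin 3)) (N := M)]
  set π := QuotientGroup.mk' M with hπ
  show π ⁅w1 ^ m, w4⁆ = 1
  have hmem2 : ⁅w1 ^ m, w2⁆ ∈ N := by
    rw [hN]
    exact Subgroup.subset_closure ⟨1, Subgroup.one_mem _, Or.inl (by group)⟩
  have hmem3 : ⁅w1 ^ m, w3⁆ ∈ N := by
    rw [hN]
    exact Subgroup.subset_closure ⟨1, Subgroup.one_mem _, Or.inr (by group)⟩
  have hc2 : π ⁅w1 ^ m, w2⁆ = 1 :=
    (QuotientGroup.eq_one_iff _).mpr (Subgroup.subset_normalClosure hmem2)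
  have hc3 : π ⁅w1 ^ m, w3⁆ = 1 :=
    (QuotientGroup.eq_one_iff _).mpr (Subgroup.subset_normalClosure hmem3)
  rw [map_commutatorElement, map_pow]
  refine commutatorElement_eq_one_iff_commute.mpr ?_
  have hXa : Commute ((π w1) ^ m) (π a) := by
    rw [h1, map_pow]
    exact ((Commute.refl (π a)).pow_left 4).pow_left m
  have hXw2 : Commute ((π w1) ^ m) (π w2) := by
    refine commutatorElement_eq_one_iff_commute.mp ?_
    rw [← map_pow, ← map_commutatorElement]
    exact hc2
  have hXw3 : Commute ((π w1) ^ m) (π w3) := by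
    refine commutatorElement_eq_one_iff_commute.mp ?_
    rw [← map_pow, ← map_commutatorElement]
    exact hc3
  rw [hw4, map_mul, map_mul, map_mul, map_mul, map_mul, map_inv, map_inv]
  exact (((((hXa.inv_right.mul_right hXa.inv_right).mul_right hXw2).mul_right
    hXa).mul_right hXw3.inv_right).mul_right hXa)

lemma sep (a b c : FreeGroup (Fin 3))
    (ha : a = FreeGroup.of 0) (hb : b = FreeGroup.of 1) (hc : c = FreeGroup.of 2)
    (w1 w2 w3 : FreeGroup (Fin 3))
    (h1 : w1 = a ^ 4) (h2 : w2 = a ^ 2 * b * a) (h3 : w3 = a * c * a ^ 2)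
    {x : FreeGroup (Fin 3)} (hx : x ≠ 1) :
    ∃ k : ℕ, 0 < k ∧ ∀ m : ℕ, k ∣ 4 * m →
      x ∉ Subgroup.normalClosure {⁅w1 ^ m, w2⁆, ⁅w1 ^ m, w3⁆} := by
  obtain ⟨l, φ, hφ⟩ := Stmt13Aux.rf hx
  refine ⟨orderOf (φ a), orderOf_pos _, ?_⟩
  intro m hdvd hmem
  have hpow : φ (w1 ^ m) = 1 := by
    rw [h1, map_pow, map_pow, ← pow_mul]
    exact orderOf_dvd_iff_pow_eq_one.mp hdvd
  have hker : Subgroup.normalClosure {⁅w1 ^ m, w2⁆, ⁅w1 ^ m, w3⁆} ≤ φ.ker := by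
    refine Subgroup.normalClosure_le_normal ?_
    rintro t (rfl | rfl) <;>
    · show _ ∈ φ.ker
      rw [MonoidHom.mem_ker, map_commutatorElement, hpow]
      group
  exact hφ (hker hmem)

end Stmt13Aux2

/-- In `F = F(a,b,c)` with `H = ⟨a⁴, a²ba, aca², bc⁻¹⟩` and
`Nₙ = ⟪[w₁ⁿ,w₂], [w₁ⁿ,w₃]⟫_H`, the commutator `[w₁ⁿ,w₄]` belongs to `⟪Nₙ⟫_F` but not
to `Nₙ`; consequently `H` does not have ACEP in `F`. -/
theorem stmt13 (a b c : FreeGroup (Fin 3))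
    (ha : a = FreeGroup.of 0) (hb : b = FreeGroup.of 1) (hc : c = FreeGroup.of 2)
    (w1 w2 w3 w4 : FreeGroup (Fin 3))
    (h1 : w1 = a ^ 4) (h2 : w2 = a ^ 2 * b * a) (h3 : w3 = a * c * a ^ 2)
    (h4 : w4 = b * c⁻¹)
    (H : Subgroup (FreeGroup (Fin 3))) (hH : H = Subgroup.closure {w1, w2, w3, w4})
    (n : ℕ) (hn : n ≠ 0)
    (N : Subgroup (FreeGroup (Fin 3)))
    (hN : N = Subgroup.closure
      {x | ∃ h ∈ H, x = h * ⁅w1 ^ n, w2⁆ * h⁻¹ ∨ x = h * ⁅w1 ^ n, w3⁆ * h⁻¹}) :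
    ⁅w1 ^ n, w4⁆ ∈ Subgroup.normalClosure (N : Set (FreeGroup (Fin 3))) ∧
      ⁅w1 ^ n, w4⁆ ∉ N ∧ ¬ ACEP H := by
  refine ⟨Stmt13Aux2.partA a b c ha hb hc w1 w2 w3 w4 h1 h2 h3 h4 H hH n N hN,
    Stmt13Aux2.partB a b c ha hb hc w1 w2 w3 w4 h1 h2 h3 h4 H hH n hn N hN, ?_⟩
  rintro ⟨Φ, hΦ, hA⟩
  have hsep0 : ∀ x : {x // x ∈ Φ}, ∃ k : ℕ, 0 < k ∧ ∀ m : ℕ, k ∣ 4 * m →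
      (x : FreeGroup (Fin 3)) ∉ Subgroup.normalClosure {⁅w1 ^ m, w2⁆, ⁅w1 ^ m, w3⁆} :=
    fun x => Stmt13Aux2.sep a b c ha hb hc w1 w2 w3 h1 h2 h3 (hΦ x x.2).2
  choose k hk hsep using hsep0
  set m := ∏ x ∈ Φ.attach, k x with hm
  have hm0 : m ≠ 0 := (Finset.prod_pos (fun x _ => hk x)).ne'
  set S : Set (FreeGroup (Fin 3)) :=
    {x | ∃ h ∈ H, x = h * ⁅w1 ^ m, w2⁆ * h⁻¹ ∨ x = h * ⁅w1 ^ m, w3⁆ * h⁻¹} with hS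
  set N' := Subgroup.closure S with hN'
  have hw1H : w1 ∈ H := by rw [hH]; exact Subgroup.subset_closure (by simp)
  have hw2H : w2 ∈ H := by rw [hH]; exact Subgroup.subset_closure (by simp)
  have hw3H : w3 ∈ H := by rw [hH]; exact Subgroup.subset_closure (by simp)
  have hw4H : w4 ∈ H := by rw [hH]; exact Subgroup.subset_closure (by simp)
  have hcommH : ∀ u ∈ H, ⁅w1 ^ m, u⁆ ∈ H := by
    intro u hu
    rw [commutatorElement_def]
    exact mul_mem (mul_mem (mul_mem (pow_mem hw1H m) hu) (inv_mem (pow_mem hw1H m)))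
      (inv_mem hu)
  have hNH : N' ≤ H := by
    rw [hN', Subgroup.closure_le]
    rintro x ⟨h, hh, (rfl | rfl)⟩
    · exact mul_mem (mul_mem hh (hcommH w2 hw2H)) (inv_mem hh)
    · exact mul_mem (mul_mem hh (hcommH w3 hw3H)) (inv_mem hh)
  have hconj : ∀ h ∈ H, ∀ x ∈ N', h * x * h⁻¹ ∈ N' := by
    intro h hh x hx
    rw [hN'] at hx ⊢
    refine Subgroup.closure_induction ?_ ?_ ?_ ?_ hx
    · rintro y ⟨h', hh', (rfl | rfl)⟩
      · exact Subgroup.subset_closure ⟨h * h', mul_mem hh hh', Or.inl (by group)⟩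
      · exact Subgroup.subset_closure ⟨h * h', mul_mem hh hh', Or.inr (by group)⟩
    · rw [mul_one, mul_inv_cancel]; exact one_mem _
    · intro x y _ _ hx' hy'
      have he : h * (x * y) * h⁻¹ = (h * x * h⁻¹) * (h * y * h⁻¹) := by group
      rw [he]; exact mul_mem hx' hy'
    · intro x _ hx'
      have he : h * x⁻¹ * h⁻¹ = (h * x * h⁻¹)⁻¹ := by group
      rw [he]; exact inv_mem hx'
  have havoid : ∀ x ∈ Φ, x ∉ N' := by
    intro x hx hxN
    have hle : N' ≤ Subgroup.normalClosure {⁅w1 ^ m, w2⁆, ⁅w1 ^ m, w3⁆} := by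
      rw [hN', Subgroup.closure_le]
      rintro t ⟨h, hh, (rfl | rfl)⟩
      · exact SetLike.mem_coe.mpr (Subgroup.normalClosure_normal.conj_mem _
          (Subgroup.subset_normalClosure (by simp)) h)
      · exact SetLike.mem_coe.mpr (Subgroup.normalClosure_normal.conj_mem _
          (Subgroup.subset_normalClosure (by simp)) h)
    exact hsep ⟨x, hx⟩ m
      ((Finset.dvd_prod_of_mem k (Finset.mem_attach _ ⟨x, hx⟩)).mul_left 4) (hle hxN)
  have happ := hA N' hNH hconj havoid
  have htH : ⁅w1 ^ m, w4⁆ ∈ H := hcommH w4 hw4H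
  have htNC : ⁅w1 ^ m, w4⁆ ∈ Subgroup.normalClosure (N' : Set (FreeGroup (Fin 3))) :=
    Stmt13Aux2.partA a b c ha hb hc w1 w2 w3 w4 h1 h2 h3 h4 H hH m N' (by rw [hN', hS])
  have hmemN' : ⁅w1 ^ m, w4⁆ ∈ (N' : Set (FreeGroup (Fin 3))) := by
    rw [← happ]; exact ⟨htH, htNC⟩
  exact Stmt13Aux2.partB a b c ha hb hc w1 w2 w3 w4 h1 h2 h3 h4 H hH m hm0 N'
    (by rw [hN', hS]) hmemN'
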